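/- Fix n ≥ 3, pairwise distinct indices j, k, ℓ ∈ Fin n, and c ∈ ℝ with c ≠ 0, and let φ be the shear flow defined by φ(t,x)_j = x_j cos(c x_ℓ t) + x_k sin(c x_ℓ t), φ(t,x)_k = −x_j sin(c x_ℓ t) + x_k cos(c x_ℓ t), φ(t,x)_p = x_p for p ∉ {j,k}. Let x ∈ ℝⁿ with x_ℓ ≠ 0, let m ∈ ℕ, and set t_m := 2πm / (c x_ℓ). Then φ(t_m, x) = x, the map y ↦ φ(t_m, y) is Fréchet differentiable at x, and its derivative equals id + m • A, where A : ℝⁿ → ℝⁿ is the linear map A(η) := (2π / x_ℓ) η_ℓ (x_k e_j − x_j e_k). -/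

import Mathlib

open Real

/-- The explicit shear flow: rotation in the `(j,k)`-plane with angular velocity `c * x ℓ`. -/
noncomputable def shearFlow (n : ℕ) (j k ℓ : Fin n) (c : ℝ) (t : ℝ) (x : Fin n → ℝ) :
    Fin n → ℝ :=
  fun p =>
    if p = j then x j * Real.cos (c * x ℓ * t) + x k * Real.sin (c * x ℓ * t)
    else if p = k then -(x j) * Real.sin (c * x ℓ * t) + x k * Real.cos (c * x ℓ * t)
    else x p

/-- The linear map `A η := (2π / x ℓ) * η ℓ • (x k • e j - x j • e k)`. -/
noncomputable def shearNilpotent (n : ℕ) (j k ℓ : Fin n) (x : Fin n → ℝ) :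
    (Fin n → ℝ) →L[ℝ] (Fin n → ℝ) :=
  (2 * Real.pi / x ℓ) •
    ((ContinuousLinearMap.proj ℓ : (Fin n → ℝ) →L[ℝ] ℝ).smulRight
      ((x k) • (Pi.single j 1 : Fin n → ℝ) - (x j) • (Pi.single k 1 : Fin n → ℝ)))

/-- if `x ℓ ≠ 0` and `t_m := 2πm/(c x ℓ)`, then `φ(t_m, x) = x`, the map
`y ↦ φ(t_m, y)` is Fréchet differentiable at `x`, and its derivative is `id + m • A`,
with `A η := (2π / x ℓ) * η ℓ • (x k • e j - x j • e k)`. -/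
theorem shearFlow_return_map_deriv
    (n : ℕ) (hn : 3 ≤ n) (j k ℓ : Fin n)
    (hjk : j ≠ k) (hjl : j ≠ ℓ) (hkl : k ≠ ℓ)
    (c : ℝ) (hc : c ≠ 0)
    (x : Fin n → ℝ) (hx : x ℓ ≠ 0) (m : ℕ) :
    shearFlow n j k ℓ c (2 * Real.pi * m / (c * x ℓ)) x = x ∧
    HasFDerivAt (fun y => shearFlow n j k ℓ c (2 * Real.pi * m / (c * x ℓ)) y)
      (ContinuousLinearMap.id ℝ (Fin n → ℝ) + (m : ℝ) • shearNilpotent n j k ℓ x) x := by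
  set T : ℝ := 2 * Real.pi * m / (c * x ℓ) with hT
  have hcx : c * x ℓ ≠ 0 := mul_ne_zero hc hx
  have hθ : c * x ℓ * T = 2 * Real.pi * m := by
    rw [hT]; field_simp
  have hcos1 : Real.cos (c * x ℓ * T) = 1 := by
    rw [hθ]
    have : (2 : ℝ) * Real.pi * m = m * (2 * Real.pi) := by ring
    rw [this, Real.cos_nat_mul_two_pi]
  have hsin0 : Real.sin (c * x ℓ * T) = 0 := by
    rw [hθ]
    have : (2 : ℝ) * Real.pi * m = (2 * m : ℕ) * Real.pi := by push_cast; ring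
    rw [this, Real.sin_nat_mul_pi]
  have hcT : c * T = 2 * Real.pi * m / x ℓ := by
    rw [eq_div_iff hx, ← hθ]
    ring
  constructor
  · funext p
    simp only [shearFlow]
    split_ifs with h1 h2
    · rw [hcos1, hsin0, h1]; ring
    · rw [hcos1, hsin0, h2]; ring
    · rfl
  · rw [hasFDerivAt_pi']
    intro p
    -- derivative of the angle
    have hang : HasFDerivAt (fun y : Fin n → ℝ => c * y ℓ * T)
        ((c * T) • (ContinuousLinearMap.proj ℓ : (Fin n → ℝ) →L[ℝ] ℝ)) x := by
      have h0 : HasFDerivAt (fun y : Fin n → ℝ => y ℓ)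
          (ContinuousLinearMap.proj ℓ : (Fin n → ℝ) →L[ℝ] ℝ) x :=
        (ContinuousLinearMap.proj ℓ : (Fin n → ℝ) →L[ℝ] ℝ).hasFDerivAt
      have := (h0.const_mul c).mul_const T
      refine this.congr_fderiv ?_
      rw [smul_smul, mul_comm]
    have hcosd : HasFDerivAt (fun y : Fin n → ℝ => Real.cos (c * y ℓ * T))
        ((-Real.sin (c * x ℓ * T)) • ((c * T) • (ContinuousLinearMap.proj ℓ :
          (Fin n → ℝ) →L[ℝ] ℝ))) x :=
      ((Real.hasDerivAt_cos (c * x ℓ * T)).comp_hasFDerivAt x hang :)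
    have hsind : HasFDerivAt (fun y : Fin n → ℝ => Real.sin (c * y ℓ * T))
        ((Real.cos (c * x ℓ * T)) • ((c * T) • (ContinuousLinearMap.proj ℓ :
          (Fin n → ℝ) →L[ℝ] ℝ))) x :=
      ((Real.hasDerivAt_sin (c * x ℓ * T)).comp_hasFDerivAt x hang :)
    have hpj : HasFDerivAt (fun y : Fin n → ℝ => y j)
        (ContinuousLinearMap.proj j : (Fin n → ℝ) →L[ℝ] ℝ) x :=
      (ContinuousLinearMap.proj j : (Fin n → ℝ) →L[ℝ] ℝ).hasFDerivAt
    have hpk : HasFDerivAt (fun y : Fin n → ℝ => y k)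
        (ContinuousLinearMap.proj k : (Fin n → ℝ) →L[ℝ] ℝ) x :=
      (ContinuousLinearMap.proj k : (Fin n → ℝ) →L[ℝ] ℝ).hasFDerivAt
    by_cases h1 : p = j
    · subst h1
      simp only [shearFlow, if_pos rfl]
      have h := (hpj.mul hcosd).add (hpk.mul hsind)
      refine h.congr_fderiv ?_
      ext η
      simp only [ContinuousLinearMap.coe_comp', Function.comp_apply,
        ContinuousLinearMap.add_apply, ContinuousLinearMap.coe_id', id_eq,
        ContinuousLinearMap.coe_smul', Pi.smul_apply, ContinuousLinearMap.proj_apply,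
        shearNilpotent, ContinuousLinearMap.smulRight_apply, Pi.add_apply, Pi.sub_apply,
        hcos1, hsin0, smul_eq_mul]
      rw [Pi.single_eq_same, Pi.single_eq_of_ne hjk, hcT]
      field_simp
      ring
    · by_cases h2 : p = k
      · subst h2
        simp only [shearFlow, if_neg h1, if_pos rfl]
        have hnj : HasFDerivAt (fun y : Fin n → ℝ => -(y j))
            (-(ContinuousLinearMap.proj j : (Fin n → ℝ) →L[ℝ] ℝ)) x := hpj.neg
        have h := (hnj.mul hsind).add (hpk.mul hcosd)
        refine h.congr_fderiv ?_
        ext η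
        simp only [ContinuousLinearMap.coe_comp', Function.comp_apply,
          ContinuousLinearMap.add_apply, ContinuousLinearMap.coe_id', id_eq,
          ContinuousLinearMap.coe_smul', Pi.smul_apply, ContinuousLinearMap.proj_apply,
          shearNilpotent, ContinuousLinearMap.smulRight_apply, Pi.add_apply, Pi.sub_apply,
          ContinuousLinearMap.neg_apply, Pi.neg_apply,
          hcos1, hsin0, smul_eq_mul]
        rw [Pi.single_eq_of_ne h1, Pi.single_eq_same, hcT]
        field_simp
        ring
      · simp only [shearFlow, if_neg h1, if_neg h2]
        have h : HasFDerivAt (fun y : Fin n → ℝ => y p)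
            (ContinuousLinearMap.proj p : (Fin n → ℝ) →L[ℝ] ℝ) x :=
          (ContinuousLinearMap.proj p : (Fin n → ℝ) →L[ℝ] ℝ).hasFDerivAt
        refine h.congr_fderiv ?_
        ext η
        simp only [ContinuousLinearMap.coe_comp', Function.comp_apply,
          ContinuousLinearMap.add_apply, ContinuousLinearMap.coe_id', id_eq,
          ContinuousLinearMap.coe_smul', Pi.smul_apply, ContinuousLinearMap.proj_apply,
          shearNilpotent, ContinuousLinearMap.smulRight_apply, Pi.add_apply, Pi.sub_apply,
          smul_eq_mul]
        rw [Pi.single_eq_of_ne h1, Pi.single_eq_of_ne h2]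
        ring
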